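/- arXiv:2102.05979 — 3 statements merged into one kernel-verified Lean document; each statement's English description precedes it below -/
import Mathlib

section
/- Let x ∈ E(τ) for some τ ≥ 2. Then for any ε > 0, for all sufficiently large real q, the interval [q, q^{τ+ε−1}] contains the denominator of some convergent (partial quotient) of the continued fraction expansion of x. -/
set_option maxHeartbeats 1000000
open GenContFract
local notation "gof" => GenContFract.of


-- irrational numbers never terminate
lemma myNotTerm (x : ℝ) (hx : Irrational x) (n : ℕ) : ¬(gof x).TerminatedAt n := by
  intro h
  have hterm : (gof x).Terminates := ⟨n, h⟩
  obtain ⟨q, hq⟩ := exists_rat_eq_of_terminates hterm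
  exact hx.ne_rat q hq

-- denominators are at least 1
lemma myOneLe (x : ℝ) (hx : Irrational x) (n : ℕ) : (1 : ℝ) ≤ (gof x).dens n := by
  have h := succ_nth_fib_le_of_nth_den (v := x) (n := n) (Or.inr (myNotTerm x hx _))
  refine le_trans ?_ h
  have : 1 ≤ Nat.fib (n + 1) := Nat.fib_pos.2 n.succ_pos
  exact_mod_cast this

-- integrality of contsAux
lemma myIntAux (x : ℝ) (hx : Irrational x) (n : ℕ) :
    ((∃ z : ℤ, ((gof x).contsAux n).a = (z : ℝ)) ∧ ∃ m : ℕ, ((gof x).contsAux n).b = (m : ℝ)) ∧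
    ((∃ z : ℤ, ((gof x).contsAux (n+1)).a = (z : ℝ)) ∧
      ∃ m : ℕ, ((gof x).contsAux (n+1)).b = (m : ℝ)) := by
  induction n with
  | zero =>
    constructor
    · exact ⟨⟨1, by simp [contsAux]⟩, ⟨0, by simp [contsAux]⟩⟩
    · refine ⟨⟨⌊x⌋, ?_⟩, ⟨1, by simp [contsAux]⟩⟩
      show ((gof x).contsAux 1).a = _
      simp [contsAux, of_h_eq_floor]
  | succ n IH =>
    refine ⟨IH.2, ?_⟩
    obtain ⟨gp, hgp⟩ : ∃ gp, (gof x).s.get? n = some gp :=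
      Option.ne_none_iff_exists'.1 (myNotTerm x hx n)
    have ha1 : gp.a = 1 := of_partNum_eq_one (partNum_eq_s_a hgp)
    obtain ⟨z, hz⟩ : ∃ z : ℤ, gp.b = (z : ℝ) :=
      exists_int_eq_of_partDen (partDen_eq_s_b hgp)
    have hb1 : (1 : ℝ) ≤ gp.b := of_one_le_get?_partDen (partDen_eq_s_b hgp)
    have hz1 : 1 ≤ z := by exact_mod_cast hz ▸ hb1
    have hrec := contsAux_recurrence hgp rfl rfl (g := gof x) (n := n)
    obtain ⟨⟨⟨za, hza⟩, ⟨ma, hma⟩⟩, ⟨zb, hzb⟩, ⟨mb, hmb⟩⟩ := IH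
    rw [hrec]
    constructor
    · exact ⟨z * zb + za, by push_cast [ha1, hz, hza, hzb]; ring⟩
    · refine ⟨z.toNat * mb + ma, ?_⟩
      have h0 : (z.toNat : ℤ) = z := Int.toNat_of_nonneg (by omega)
      have h' : (z.toNat : ℝ) = (z : ℝ) := by exact_mod_cast h0
      push_cast [ha1, hz, hma, hmb, h']
      ring

lemma myInt (x : ℝ) (hx : Irrational x) (n : ℕ) :
    (∃ z : ℤ, (gof x).nums n = (z : ℝ)) ∧ ∃ m : ℕ, (gof x).dens n = (m : ℝ) := by
  have := (myIntAux x hx n).2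
  rwa [num_eq_conts_a, den_eq_conts_b, nth_cont_eq_succ_nth_contAux]

-- strict monotonicity from index 1
lemma myStrict (x : ℝ) (hx : Irrational x) (n : ℕ) :
    (gof x).dens (n + 1) < (gof x).dens (n + 2) := by
  obtain ⟨gp, hgp⟩ : ∃ gp, (gof x).s.get? (n+1) = some gp :=
    Option.ne_none_iff_exists'.1 (myNotTerm x hx (n+1))
  have ha1 : gp.a = 1 := of_partNum_eq_one (partNum_eq_s_a hgp)
  have hb1 : (1 : ℝ) ≤ gp.b := of_one_le_get?_partDen (partDen_eq_s_b hgp)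
  have hrec := dens_recurrence hgp rfl rfl (g := gof x) (n := n)
  rw [hrec, ha1]
  have h1 : (1:ℝ) ≤ (gof x).dens n := myOneLe x hx n
  have h2 : (1:ℝ) ≤ (gof x).dens (n+1) := myOneLe x hx (n+1)
  nlinarith


noncomputable section

/-- `x` is `τ`-well approximable: `x` is irrational and `|x - p/q| < 1/q^τ` has
infinitely many solutions `(p, q) ∈ ℤ × ℕ` (with `q ≥ 1`). -/
def WellApprox (τ x : ℝ) : Prop :=
  Irrational x ∧
    {pq : ℤ × ℕ | 0 < pq.2 ∧ |x - (pq.1 : ℝ) / (pq.2 : ℝ)| < 1 / (pq.2 : ℝ) ^ τ}.Infinite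

/-- The exact order `τ(x) = sup {τ : x ∈ W(τ)}`, as an extended real number. -/
def exactOrder (x : ℝ) : EReal :=
  sSup ((fun τ : ℝ => (τ : EReal)) '' {τ : ℝ | WellApprox τ x})

/-- `x ∈ E(τ)`: `x` is irrational with exact order exactly `τ`. -/
def MemExactE (τ x : ℝ) : Prop :=
  Irrational x ∧ exactOrder x = (τ : EReal)

/-- For `x ∈ E(τ)` and any `ε > 0`, every interval `[q, q^{τ+ε-1}]` with `q`
sufficiently large contains the denominator of some convergent of the continued
fraction expansion of `x`. -/
theorem denom_of_convergent_in_interval (τ : ℝ) (hτ : 2 ≤ τ) (x : ℝ)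
    (hx : MemExactE τ x) (ε : ℝ) (hε : 0 < ε) :
    ∃ Q₀ : ℝ, ∀ q : ℝ, Q₀ ≤ q →
      ∃ n : ℕ, (GenContFract.of x).dens n ∈ Set.Icc q (q ^ (τ + ε - 1)) := by
  classical
  obtain ⟨hirr, hord⟩ := hx
  -- x is not (τ+ε)-well approximable
  have hnW : ¬ WellApprox (τ + ε) x := by
    intro h
    have hle : ((τ + ε : ℝ) : EReal) ≤ exactOrder x :=
      le_sSup (Set.mem_image_of_mem _ h)
    rw [hord, EReal.coe_le_coe_iff] at hle
    linarith
  have hS : {pq : ℤ × ℕ | 0 < pq.2 ∧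
      |x - (pq.1 : ℝ) / (pq.2 : ℝ)| < 1 / (pq.2 : ℝ) ^ (τ + ε)}.Finite := by
    rw [← Set.not_infinite]
    exact fun h => hnW ⟨hirr, h⟩
  choose zf hzf using fun n => (myInt x hirr n).1
  choose mf hmf using fun n => (myInt x hirr n).2
  have hone : ∀ n, (1 : ℝ) ≤ (gof x).dens n := myOneLe x hirr
  have hpos : ∀ n, (0 : ℝ) < (gof x).dens n := fun n => lt_of_lt_of_le one_pos (hone n)
  -- the set of "bad" indices is finite
  set Bad : Set ℕ := {k | ((gof x).dens (k+1)) ^ (τ+ε-1) ≤ (gof x).dens (k+2)} with hBadDef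
  have hmaps : ∀ k ∈ Bad, (zf (k+1), mf (k+1)) ∈
      {pq : ℤ × ℕ | 0 < pq.2 ∧ |x - (pq.1 : ℝ) / (pq.2 : ℝ)| < 1 / (pq.2 : ℝ) ^ (τ + ε)} := by
    intro k hk
    set n := k + 1 with hn
    have hmpos : 0 < mf n := by
      by_contra h
      have : mf n = 0 := by omega
      have := hmf n
      rw [this] at this
      have h1 := hone n
      rw [hmf n, ‹mf n = 0›] at h1
      norm_num at h1
    refine ⟨hmpos, ?_⟩
    have hconv : (gof x).convs n = (zf n : ℝ) / (mf n : ℝ) := by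
      rw [conv_eq_num_div_den, hzf n, hmf n]
    have habs := abs_sub_convs_le (v := x) (n := n) (myNotTerm x hirr n)
    -- the bound is rational, the lhs irrational, so strict
    have hq : ((zf n / (mf n : ℤ) : ℚ) : ℝ) = (zf n : ℝ) / (mf n : ℝ) := by push_cast; ring
    have hy : Irrational (x - ((zf n : ℝ) / (mf n : ℝ))) := by
      rw [← hq]; exact Irrational.sub_ratCast _ hirr
    have hyabs : Irrational |x - ((zf n : ℝ) / (mf n : ℝ))| := by
      rcases abs_cases (x - ((zf n : ℝ) / (mf n : ℝ))) with ⟨h, _⟩ | ⟨h, _⟩ <;> rw [h]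
      · exact hy
      · exact hy.neg
    have hbrat : 1 / ((gof x).dens n * (gof x).dens (n+1)) =
        ((1 / ((mf n : ℚ) * (mf (n+1) : ℚ)) : ℚ) : ℝ) := by
      rw [hmf n, hmf (n+1)]; push_cast; ring
    have hstrict : |x - ((zf n : ℝ) / (mf n : ℝ))| <
        1 / ((gof x).dens n * (gof x).dens (n+1)) := by
      rw [← hconv] at hyabs ⊢
      refine lt_of_le_of_ne habs ?_
      rw [hbrat]
      exact hyabs.ne_rat _
    have hBadk : ((gof x).dens n) ^ (τ+ε-1) ≤ (gof x).dens (n+1) := hk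
    have hprod : ((gof x).dens n) ^ (τ+ε) ≤ (gof x).dens n * (gof x).dens (n+1) := by
      have h1 : ((gof x).dens n) ^ (τ+ε) =
          (gof x).dens n * ((gof x).dens n) ^ (τ+ε-1) := by
        have h2 := Real.rpow_add (hpos n) 1 (τ+ε-1)
        rw [Real.rpow_one, show (1:ℝ)+(τ+ε-1) = τ+ε by ring] at h2
        exact h2
      rw [h1]
      exact mul_le_mul_of_nonneg_left hBadk (le_of_lt (hpos n))
    have hfin : |x - ((zf n : ℝ) / (mf n : ℝ))| < 1 / ((gof x).dens n) ^ (τ+ε) := by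
      refine lt_of_lt_of_le hstrict ?_
      apply one_div_le_one_div_of_le
      · exact Real.rpow_pos_of_pos (hpos n) _
      · exact hprod
    simpa only [Set.mem_setOf_eq, hmf n] using hfin
  have hinj : Set.InjOn (fun k => (zf (k+1), mf (k+1))) Bad := by
    have hD : StrictMono (fun k => (gof x).dens (k+1)) :=
      strictMono_nat_of_lt_succ fun k => myStrict x hirr k
    intro a _ b _ hab
    have : mf (a+1) = mf (b+1) := congrArg Prod.snd hab
    have hd : (gof x).dens (a+1) = (gof x).dens (b+1) := by
      rw [hmf (a+1), hmf (b+1), this]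
    exact hD.injective hd
  have hBadFin : Bad.Finite := by
    apply Set.Finite.of_finite_image _ hinj
    exact hS.subset (Set.image_subset_iff.mpr hmaps)
  obtain ⟨N, hN⟩ := hBadFin.bddAbove
  have hgood : ∀ k, N + 1 ≤ k → (gof x).dens (k+2) < ((gof x).dens (k+1)) ^ (τ+ε-1) := by
    intro k hk
    by_contra h
    push_neg at h
    have : k ∈ Bad := h
    have := hN this
    omega
  -- denominators get arbitrarily large
  have hbig : ∀ r : ℝ, ∃ n : ℕ, r ≤ (gof x).dens n := by
    intro r
    obtain ⟨k, hk⟩ := exists_nat_ge r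
    refine ⟨max k 5, ?_⟩
    have h1 : (k : ℝ) ≤ (Nat.fib (max k 5 + 1) : ℝ) := by
      have : k ≤ Nat.fib (max k 5 + 1) :=
        le_trans (le_trans (le_max_left k 5)
          (Nat.le_fib_self (le_max_right k 5))) (Nat.fib_le_fib_succ)
      exact_mod_cast this
    have h2 := succ_nth_fib_le_of_nth_den (v := x) (n := max k 5)
      (Or.inr (myNotTerm x hirr _))
    linarith
  refine ⟨(gof x).dens (N + 2) + 1, ?_⟩
  intro q hq
  have hmono : Monotone ((gof x).dens) := monotone_nat_of_le_succ fun n => of_den_mono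
  have hqN : (gof x).dens (N + 2) < q := by linarith
  obtain ⟨n0, hn0⟩ := hbig q
  have hex : ∃ n, q ≤ (gof x).dens n := ⟨n0, hn0⟩
  set n := Nat.find hex with hnd
  have hspec : q ≤ (gof x).dens n := Nat.find_spec hex
  have hmin : ∀ m, m < n → (gof x).dens m < q := fun m hm =>
    lt_of_not_ge (Nat.find_min hex hm)
  have hnge : N + 3 ≤ n := by
    by_contra h
    push_neg at h
    have : (gof x).dens n ≤ (gof x).dens (N + 2) := hmono (by omega)
    linarith
  obtain ⟨k, hk2⟩ : ∃ k, n = k + 2 := ⟨n - 2, by omega⟩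
  refine ⟨k + 2, by rw [← hk2]; exact hspec, ?_⟩
  have hk1 : (gof x).dens (k+1) < q := hmin (k+1) (by omega)
  have h3 := hgood k (by omega)
  refine le_trans (le_of_lt h3) ?_
  exact Real.rpow_le_rpow (le_of_lt (hpos (k+1))) (le_of_lt hk1) (by linarith)
end
end

section
/- Let α, β be irrational and (x_n)_{n≥0} an αβ orbit with difference sequence ω. Suppose that for every C > 1 there exist infinitely many N ∈ ℕ such that either |ω|_{α,N} ≥ C·|ω|_{β,N} or |ω|_{β,N} ≥ C·|ω|_{α,N}. Then {x_n : n ≥ 0} is dense in 𝕋. -/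
noncomputable section

/-- The unit circle `ℝ/ℤ`. -/
abbrev Circle1 : Type := AddCircle (1 : ℝ)

/-- `(x_n)_{n≥0}` is an `αβ` orbit on the circle: each step adds `α` or `β` (mod 1). -/
def IsABOrbit (α β : ℝ) (x : ℕ → Circle1) : Prop :=
  ∀ n : ℕ, x (n + 1) = x n + (α : Circle1) ∨ x (n + 1) = x n + (β : Circle1)

/-- `ω` is the difference sequence of the `αβ` orbit `(x_n)`: for every `n ≥ 1`,
`ω n ∈ {α, β}` and `x_n - x_{n-1} = ω_n` (mod 1). -/
def IsDiffSeq (α β : ℝ) (x : ℕ → Circle1) (ω : ℕ → ℝ) : Prop :=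
  ∀ n : ℕ, 1 ≤ n → (ω n = α ∨ ω n = β) ∧ x n = x (n - 1) + ((ω n : ℝ) : Circle1)

/-- `|ω|_{γ,N}`: the number of `1 ≤ n ≤ N` with `ω n = γ`. -/
def countIn (ω : ℕ → ℝ) (γ : ℝ) (N : ℕ) : ℕ :=
  Set.ncard {n : ℕ | 1 ≤ n ∧ n ≤ N ∧ ω n = γ}

/-- For an irrational `γ`, the integer multiples of `γ` are dense in the circle. -/
lemma denseRange_zsmul_irrational (γ : ℝ) (hγ : Irrational γ) :
    DenseRange (fun j : ℤ => j • ((γ : ℝ) : Circle1)) := by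
  have hS : Dense ((AddSubgroup.zmultiples γ ⊔ AddSubgroup.zmultiples (1:ℝ) :
      AddSubgroup ℝ) : Set ℝ) := by
    rcases (AddSubgroup.zmultiples γ ⊔ AddSubgroup.zmultiples (1:ℝ)).dense_or_cyclic with
      hd | ⟨a, ha⟩
    · exact hd
    · exfalso
      have hγS : γ ∈ AddSubgroup.closure {a} := by
        rw [← ha]; exact AddSubgroup.mem_sup_left (AddSubgroup.mem_zmultiples γ)
      have h1S : (1:ℝ) ∈ AddSubgroup.closure {a} := by
        rw [← ha]; exact AddSubgroup.mem_sup_right (AddSubgroup.mem_zmultiples 1)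
      rw [← AddSubgroup.zmultiples_eq_closure, AddSubgroup.mem_zmultiples_iff] at hγS h1S
      obtain ⟨m, hm⟩ := hγS
      obtain ⟨n, hn⟩ := h1S
      have hn0' : n ≠ 0 := by rintro rfl; simp at hn
      have hn0 : (n : ℝ) ≠ 0 := Int.cast_ne_zero.mpr hn0'
      apply (irrational_iff_ne_rational γ).mp hγ m n
      rw [zsmul_eq_mul] at hm hn
      exact hn0'
      rw [eq_div_iff hn0]
      linear_combination (-(n:ℝ)) * hm + (m:ℝ) * hn
  have hcont : Continuous ((↑) : ℝ → Circle1) := continuous_quotient_mk'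
  have hsurj : DenseRange ((↑) : ℝ → Circle1) :=
    (Quotient.mk''_surjective).denseRange
  have himg := hsurj.dense_image hcont hS
  refine himg.mono ?_
  rintro _ ⟨r, hr, rfl⟩
  rw [SetLike.mem_coe, AddSubgroup.mem_sup] at hr
  obtain ⟨y, hy, z, hz, rfl⟩ := hr
  rw [AddSubgroup.mem_zmultiples_iff] at hy hz
  obtain ⟨m, rfl⟩ := hy
  obtain ⟨n, rfl⟩ := hz
  refine ⟨m, ?_⟩
  push_cast
  simp [QuotientAddGroup.mk_add, QuotientAddGroup.mk_zsmul]

/-- For an irrational `γ` and `ε > 0`, there is a `K` such that any `K` consecutive points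
of an orbit of the rotation by `γ` are `ε`-dense in the circle. -/
lemma exists_net (γ : ℝ) (hγ : Irrational γ) {ε : ℝ} (hε : 0 < ε) :
    ∃ K : ℕ, 0 < K ∧ ∀ w z : Circle1, ∃ j : ℕ, j < K ∧
      dist z (w + j • ((γ : ℝ) : Circle1)) < ε := by
  haveI : Fact ((0:ℝ) < 1) := ⟨one_pos⟩
  have hd := denseRange_zsmul_irrational γ hγ
  set f : ℤ → Circle1 := fun j => j • ((γ : ℝ) : Circle1) with hf
  have hcover : (Set.univ : Set Circle1) ⊆ ⋃ j : ℤ, Metric.ball (f j) ε := by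
    intro y _
    obtain ⟨j, hj⟩ := hd.exists_dist_lt y hε
    exact Set.mem_iUnion.2 ⟨j, Metric.mem_ball.2 hj⟩
  obtain ⟨t, ht⟩ := isCompact_univ.elim_finite_subcover (fun j => Metric.ball (f j) ε)
    (fun j => Metric.isOpen_ball) hcover
  set M : ℕ := t.sup fun j => j.natAbs with hM
  refine ⟨2 * M + 1, Nat.succ_pos _, fun w z => ?_⟩
  have hy : (z - w - (M : ℤ) • ((γ : ℝ) : Circle1)) ∈ ⋃ j ∈ t, Metric.ball (f j) ε :=
    ht (Set.mem_univ _)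
  obtain ⟨j, hjt, hjball⟩ := Set.mem_iUnion₂.mp hy
  have hjM : j.natAbs ≤ M := Finset.le_sup hjt
  refine ⟨(j + M).toNat, ?_, ?_⟩
  · have : j + M ≤ 2 * M := by omega
    omega
  · have hjnn : (0 : ℤ) ≤ j + M := by omega
    have hcast : ((j + M).toNat : ℤ) = j + M := Int.toNat_of_nonneg hjnn
    have hdist : dist (z - w - (M : ℤ) • ((γ : ℝ) : Circle1)) (f j) < ε :=
      Metric.mem_ball.mp hjball
    have hre : w + ((j + M).toNat : ℕ) • ((γ : ℝ) : Circle1)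
        = (w + (M : ℤ) • ((γ : ℝ) : Circle1)) + f j := by
      rw [hf, ← natCast_zsmul, hcast, add_zsmul]
      abel
    rw [hre, dist_eq_norm]
    rw [dist_eq_norm] at hdist
    convert hdist using 2
    abel

lemma countIn_eq (ω : ℕ → ℝ) (γ : ℝ) (N : ℕ) :
    countIn ω γ N = ((Finset.Icc 1 N).filter fun n => ω n = γ).card := by
  classical
  rw [countIn, ← Set.ncard_coe_finset]
  congr 1
  ext n
  simp [Finset.mem_filter, Finset.mem_Icc, and_assoc]

/-- Pigeonhole: if among `1, …, N` at most `b` positions fail `P` and `K * (b+1) ≤ N`,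
then some window of `K` consecutive positions all satisfies `P`. -/
lemma exists_window {P : ℕ → Prop} [DecidablePred P] {N K b : ℕ}
    (hbad : ((Finset.Icc 1 N).filter fun n => ¬ P n).card ≤ b)
    (hN : K * (b + 1) ≤ N) :
    ∃ m : ℕ, ∀ j : ℕ, 1 ≤ j → j ≤ K → P (m * K + j) := by
  classical
  by_contra hcon
  push_neg at hcon
  choose g hg1 hg2 hg3 using hcon
  set f : ℕ → ℕ := fun m => m * K + g m with hf
  have hmono : ∀ a c : ℕ, a < c → f a < f c := by
    intro a c hac
    have h1 : f a ≤ a * K + K := by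
      have := hg2 a; simp only [hf]; omega
    have h2 : (a + 1) * K ≤ c * K := Nat.mul_le_mul_right K (by omega)
    have h3 : c * K < f c := by
      have := hg1 c; simp only [hf]; omega
    calc f a ≤ a * K + K := h1
      _ = (a + 1) * K := by ring
      _ ≤ c * K := h2
      _ < f c := h3
  have hinj : Set.InjOn f (Finset.range (b + 1)) := by
    intro a _ c _ hac
    rcases lt_trichotomy a c with h | h | h
    · exact absurd hac (Nat.ne_of_lt (hmono a c h))
    · exact h
    · exact absurd hac.symm (Nat.ne_of_lt (hmono c a h))
  have hmaps : ∀ m ∈ Finset.range (b + 1),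
      f m ∈ (Finset.Icc 1 N).filter fun n => ¬ P n := by
    intro m hm
    rw [Finset.mem_range] at hm
    rw [Finset.mem_filter, Finset.mem_Icc]
    refine ⟨⟨by simp only [hf]; have := hg1 m; omega, ?_⟩, hg3 m⟩
    have h1 : f m ≤ m * K + K := by have := hg2 m; simp only [hf]; omega
    have h2 : m * K + K = (m + 1) * K := by ring
    have h3 : (m + 1) * K ≤ (b + 1) * K := Nat.mul_le_mul_right K (by omega)
    have h4 : (b + 1) * K ≤ N := by rw [mul_comm]; exact hN
    omega
  have hcard := Finset.card_le_card_of_injOn f hmaps hinj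
  rw [Finset.card_range] at hcard
  omega

theorem dense_of_not_comparable (α β : ℝ) (hα : Irrational α) (hβ : Irrational β)
    (x : ℕ → Circle1) (ω : ℕ → ℝ) (hx : IsABOrbit α β x) (hω : IsDiffSeq α β x ω)
    (h : ∀ C : ℝ, 1 < C →
      {N : ℕ | C * (countIn ω β N : ℝ) ≤ (countIn ω α N : ℝ) ∨
        C * (countIn ω α N : ℝ) ≤ (countIn ω β N : ℝ)}.Infinite) :
    Dense (Set.range x) := by
  classical
  rw [Metric.dense_iff]
  intro z ε hε
  obtain ⟨Kα, hKα, hnetα⟩ := exists_net α hα hε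
  obtain ⟨Kβ, hKβ, hnetβ⟩ := exists_net β hβ hε
  set K : ℕ := max Kα Kβ with hKdef
  have hKpos : 0 < K := lt_of_lt_of_le hKα (le_max_left _ _)
  have hC : (1:ℝ) < 2 * (K : ℝ) := by
    have h1 : (1:ℝ) ≤ (K : ℝ) := by exact_mod_cast hKpos
    linarith
  obtain ⟨N, hNmem, hNgt⟩ := (h (2 * (K : ℝ)) hC).exists_gt K
  have main : ∀ (γ δ : ℝ) (Kγ : ℕ), Kγ ≤ K →
      (∀ n : ℕ, 1 ≤ n → (ω n = γ ∨ ω n = δ) ∧ x n = x (n - 1) + ((ω n : ℝ) : Circle1)) →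
      (∀ w z' : Circle1, ∃ j : ℕ, j < Kγ ∧ dist z' (w + j • ((γ : ℝ) : Circle1)) < ε) →
      ((2 * (K : ℝ)) * (countIn ω δ N : ℝ) ≤ (countIn ω γ N : ℝ)) →
      (Metric.ball z ε ∩ Set.range x).Nonempty := by
    intro γ δ Kγ hKγK hsteps hnet hcount
    set b := countIn ω δ N with hb
    set a := countIn ω γ N with ha
    have hab : 2 * K * b ≤ a := by exact_mod_cast hcount
    have haN : a ≤ N := by
      rw [ha, countIn_eq]
      calc ((Finset.Icc 1 N).filter fun n => ω n = γ).card
          ≤ (Finset.Icc 1 N).card := Finset.card_filter_le _ _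
        _ = N := by rw [Nat.card_Icc]; omega
    have hbad : ((Finset.Icc 1 N).filter fun n => ¬ ω n = γ).card ≤ b := by
      rw [hb, countIn_eq]
      apply Finset.card_le_card
      intro n hn
      rw [Finset.mem_filter] at hn ⊢
      refine ⟨hn.1, ?_⟩
      rcases (hsteps n (Finset.mem_Icc.mp hn.1).1).1 with hγ | hδ
      · exact absurd hγ hn.2
      · exact hδ
    have hKN : K * (b + 1) ≤ N := by
      rcases Nat.eq_zero_or_pos b with hb0 | hb1
      · rw [hb0]; omega
      · have h1 : K * (b + 1) = K * b + K := by ring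
        have h2 : K * 1 ≤ K * b := Nat.mul_le_mul_left K hb1
        have h3 : K * b + K ≤ 2 * K * b := by
          have : K * b + K * b = 2 * K * b := by ring
          omega
        omega
    obtain ⟨m, hm⟩ := exists_window (P := fun n => ω n = γ) hbad hKN
    have hrun : ∀ j : ℕ, j ≤ K → x (m * K + j) = x (m * K) + j • ((γ : ℝ) : Circle1) := by
      intro j
      induction j with
      | zero => simp
      | succ j ih =>
        intro hj
        have hj' : j ≤ K := by omega
        have hstep := (hsteps (m * K + j + 1) (by omega)).2
        have hωs : ω (m * K + (j + 1)) = γ := hm (j + 1) (by omega) hj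
        rw [show m * K + j + 1 - 1 = m * K + j from by omega] at hstep
        rw [show m * K + (j + 1) = m * K + j + 1 from by omega] at hωs
        have : x (m * K + (j + 1)) = x (m * K + j) + ((γ : ℝ) : Circle1) := by
          rw [show m * K + (j + 1) = m * K + j + 1 from by omega, hstep, hωs]
        rw [this, ih hj', succ_nsmul, add_assoc]
    obtain ⟨j, hjK, hdist⟩ := hnet (x (m * K)) z
    have hjle : j ≤ K := by omega
    refine ⟨x (m * K + j), Metric.mem_ball.2 ?_, Set.mem_range_self _⟩
    rw [hrun j hjle]
    rwa [dist_comm]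
  rcases hNmem with hc | hc
  · exact main α β Kα (le_max_left _ _) (fun n hn => hω n hn) hnetα hc
  · exact main β α Kβ (le_max_right _ _)
      (fun n hn => ⟨(hω n hn).1.symm, (hω n hn).2⟩) hnetβ hc
end
end

section
/- Let α be irrational with continued fraction convergent denominators (q_n), let β be a real number, and let τ₂ ≥ 2. Suppose p ∈ ℤ and q ∈ ℕ satisfy |β − p/q| ≤ 1/q^{τ₂}, and let q' = q_n be the denominator of some convergent of α satisfying 4q' ≤ q^{τ₂/2}. Then for any integers j ≠ j' with |j − j'| < q' and any integers k, k' with k ≡ k' (mod q) and |k − k'| < q', one has ‖(αj + βk) − (αj' + βk')‖ ≥ 1/(4q'), where ‖x‖ denotes the distance from x to the nearest integer. -/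
noncomputable section
open GenContFract

namespace SepAux2

variable {α : ℝ}

lemma not_term (hα : Irrational α) (n : ℕ) : ¬(GenContFract.of α).TerminatedAt n := by
  intro h
  obtain ⟨x, hx⟩ := (GenContFract.terminates_iff_rat α).1 ⟨n, h⟩
  exact hα ⟨x, hx.symm⟩

lemma one_le_dens (n : ℕ) : (1:ℝ) ≤ (GenContFract.of α).dens n := by
  induction n with
  | zero => simp
  | succ n ih => exact ih.trans of_den_mono

lemma theta_key (hα : Irrational α) (n : ℕ) :
    ∃ c : ℝ, 1 < c ∧
      c * (GenContFract.of α).dens n + ((GenContFract.of α).contsAux n).b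
        < (GenContFract.of α).dens (n+1) + (GenContFract.of α).dens n ∧
      (GenContFract.of α).dens n * α - (GenContFract.of α).nums n
        = (-1)^n / (c * (GenContFract.of α).dens n + ((GenContFract.of α).contsAux n).b) := by
  obtain ⟨gp, hgp⟩ := Option.ne_none_iff_exists'.1 (not_term hα n)
  have ha1 : gp.a = 1 := of_partNum_eq_one (partNum_eq_s_a hgp)
  obtain ⟨ifp_succ, hstream_succ, hb⟩ :=
    IntFractPair.exists_succ_get?_stream_of_gcf_of_get?_eq_some hgp
  obtain ⟨ifp, hstream, hfrne, hof⟩ :=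
    IntFractPair.succ_nth_stream_eq_some_iff.1 hstream_succ
  set c : ℝ := ifp.fr⁻¹ with hc_def
  have hfr0 : 0 < ifp.fr :=
    lt_of_le_of_ne (IntFractPair.nth_stream_fr_nonneg hstream) (Ne.symm hfrne)
  have hfr1 : ifp.fr < 1 := IntFractPair.nth_stream_fr_lt_one hstream
  have hc1 : 1 < c := by
    rw [hc_def]
    exact (one_lt_inv₀ hfr0).2 hfr1
  -- b of the next pair is the floor of c
  have hbfloor : (ifp_succ.b : ℝ) = (⌊c⌋ : ℝ) := by rw [← hof]; rfl
  have hclt : c < gp.b + 1 := by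
    rw [← hb, hbfloor]
    exact Int.lt_floor_add_one c
  -- denominator recurrence
  have hdenceq : (GenContFract.of α).dens n = ((GenContFract.of α).contsAux (n+1)).b := rfl
  have hrec : (GenContFract.of α).dens (n+1)
      = gp.b * (GenContFract.of α).dens n + ((GenContFract.of α).contsAux n).b := by
    have h2 : (GenContFract.of α).dens (n+1) = ((GenContFract.of α).contsAux (n+2)).b := rfl
    rw [h2, contsAux_recurrence hgp rfl rfl]
    simp [nextConts, nextDen, ha1, hdenceq]
  have hdpos : (0:ℝ) < (GenContFract.of α).dens n := lt_of_lt_of_le one_pos (one_le_dens n)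
  have hpB : (0:ℝ) ≤ ((GenContFract.of α).contsAux n).b := zero_le_of_contsAux_b
  refine ⟨c, hc1, ?_, ?_⟩
  · rw [hrec]; nlinarith
  · -- exact error formula
    have tmp := sub_convs_eq hstream
    simp only [hfrne, if_false] at tmp
    rw [← hdenceq] at tmp
    set B := (GenContFract.of α).dens n with hB
    set pB := ((GenContFract.of α).contsAux n).b with hpBdef
    set N := (GenContFract.of α).nums n with hN
    have hD : (0:ℝ) < c * B + pB := by nlinarith
    have hDne : c * B + pB ≠ 0 := ne_of_gt hD
    have hconv : (GenContFract.of α).convs n = N / B := conv_eq_num_div_den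
    rw [hconv] at tmp
    have hdne : B ≠ 0 := ne_of_gt hdpos
    have e1 : B * (α - N / B) = B * α - N := by field_simp
    have e2 : B * ((-1:ℝ)^n / (B * (c * B + pB))) = (-1)^n / (c * B + pB) := by
      field_simp
    calc B * α - N = B * (α - N / B) := e1.symm
      _ = B * ((-1:ℝ)^n / (B * (c * B + pB))) := by rw [tmp]
      _ = (-1)^n / (c * B + pB) := e2

lemma neg_one_pow_mul_self (n : ℕ) : (-1:ℝ)^n * (-1:ℝ)^n = 1 := by
  rw [← pow_add, ← two_mul, pow_mul]; norm_num

lemma theta_lb (hα : Irrational α) (n : ℕ) :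
    1 / ((GenContFract.of α).dens (n+1) + (GenContFract.of α).dens n)
      < (-1:ℝ)^n * ((GenContFract.of α).dens n * α - (GenContFract.of α).nums n) := by
  obtain ⟨c, hc, hlt, heq⟩ := theta_key hα n
  rw [heq]
  have hdpos : (0:ℝ) < (GenContFract.of α).dens n := lt_of_lt_of_le one_pos (one_le_dens n)
  have hpB : (0:ℝ) ≤ ((GenContFract.of α).contsAux n).b := zero_le_of_contsAux_b
  have hD : (0:ℝ) < c * (GenContFract.of α).dens n + ((GenContFract.of α).contsAux n).b := by
    nlinarith
  have h1 : (-1:ℝ)^n * ((-1:ℝ)^n /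
      (c * (GenContFract.of α).dens n + ((GenContFract.of α).contsAux n).b))
      = 1 / (c * (GenContFract.of α).dens n + ((GenContFract.of α).contsAux n).b) := by
    rw [mul_div_assoc', neg_one_pow_mul_self]
  rw [h1]
  apply one_div_lt_one_div_of_lt hD hlt

lemma theta_pos (hα : Irrational α) (n : ℕ) :
    0 < (-1:ℝ)^n * ((GenContFract.of α).dens n * α - (GenContFract.of α).nums n) := by
  refine lt_trans ?_ (theta_lb hα n)
  have h1 : (0:ℝ) < (GenContFract.of α).dens (n+1) := lt_of_lt_of_le one_pos (one_le_dens _)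
  have h2 : (0:ℝ) < (GenContFract.of α).dens n := lt_of_lt_of_le one_pos (one_le_dens _)
  positivity

/-- sign-combination helper -/
lemma abs_comb {x y s t : ℝ} (hx : 1 ≤ |x|) (hs : 0 < s) (ht : 0 < t)
    (hxy : x * y ≤ 0) : s ≤ |x * s - y * t| := by
  rcases le_abs.mp hx with h | h
  · have hy : y ≤ 0 := by nlinarith
    have : s ≤ x * s - y * t := by nlinarith
    exact this.trans (le_abs_self _)
  · have hxneg : x ≤ -1 := by linarith
    have hy : 0 ≤ y := by nlinarith
    have : s ≤ -(x * s - y * t) := by nlinarith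
    exact this.trans (neg_le_abs _)

lemma abs_comb2 {x y u v : ℝ} (hy : 1 ≤ |y|) (hu : 0 ≤ u) (hv : 0 < v)
    (hxy : 0 ≤ x * y) : v ≤ |x * u + y * v| := by
  rcases le_abs.mp hy with h | h
  · have hx : 0 ≤ x := by nlinarith
    have : v ≤ x * u + y * v := by nlinarith
    exact this.trans (le_abs_self _)
  · have hyneg : y ≤ -1 := by linarith
    have hx : x ≤ 0 := by nlinarith
    have : v ≤ -(x * u + y * v) := by nlinarith
    exact this.trans (neg_le_abs _)

lemma exists_int_contsAux (hα : Irrational α) (n : ℕ) :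
    ∃ a b : ℤ, ((GenContFract.of α).contsAux n).a = (a:ℝ) ∧
      ((GenContFract.of α).contsAux n).b = (b:ℝ) := by
  induction n using Nat.twoStepInduction with
  | zero => exact ⟨1, 0, by simp, by simp⟩
  | one => exact ⟨⌊α⌋, 1, by simp [of_h_eq_floor], by simp⟩
  | more n ih1 ih2 =>
    obtain ⟨gp, hgp⟩ := Option.ne_none_iff_exists'.1 (not_term hα n)
    have ha1 : gp.a = 1 := of_partNum_eq_one (partNum_eq_s_a hgp)
    obtain ⟨z, hz⟩ := exists_int_eq_of_partDen (partDen_eq_s_b hgp)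
    obtain ⟨a0, b0, h0a, h0b⟩ := ih1
    obtain ⟨a1, b1, h1a, h1b⟩ := ih2
    refine ⟨z * a1 + a0, z * b1 + b0, ?_, ?_⟩ <;>
      · rw [contsAux_recurrence hgp rfl rfl]
        simp [nextConts, nextNum, nextDen, ha1, hz, h0a, h0b, h1a, h1b]

lemma best_approx (hα : Irrational α) (n : ℕ) (a b : ℤ) (ha : a ≠ 0)
    (hlt : |(a:ℝ)| < (GenContFract.of α).dens n) :
    1 / (2 * (GenContFract.of α).dens n) < |(a:ℝ) * α - (b:ℝ)| := by
  have haabs : (1:ℝ) ≤ |(a:ℝ)| := by exact_mod_cast Int.one_le_abs ha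
  cases n with
  | zero => simp at hlt; linarith
  | succ m =>
    obtain ⟨PP, QP, hPP, hQP⟩ := exists_int_contsAux hα (m+1)
    obtain ⟨PN, QN, hPN, hQN⟩ := exists_int_contsAux hα (m+2)
    have hppn : (GenContFract.of α).nums m = (PP:ℝ) := hPP
    have hqpn : (GenContFract.of α).dens m = (QP:ℝ) := hQP
    have hpnn : (GenContFract.of α).nums (m+1) = (PN:ℝ) := hPN
    have hqnn : (GenContFract.of α).dens (m+1) = (QN:ℝ) := hQN
    have hdet : (GenContFract.of α).nums m * (GenContFract.of α).dens (m+1) -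
        (GenContFract.of α).dens m * (GenContFract.of α).nums (m+1) = (-1:ℝ)^(m+1) :=
      SimpContFract.determinant (s := SimpContFract.of α) (not_term hα m)
    rw [hppn, hqpn, hpnn, hqnn] at hdet
    -- the two error terms with their signs
    set sm : ℝ := (-1:ℝ)^m * ((QP:ℝ) * α - (PP:ℝ)) with hsmdef
    set sn : ℝ := (-1:ℝ)^(m+1) * ((QN:ℝ) * α - (PN:ℝ)) with hsndef
    have hsm : 1 / ((QN:ℝ) + (QP:ℝ)) < sm := by
      have := theta_lb hα m
      rwa [hppn, hqpn, hqnn] at this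
    have hsn0 : 0 < sn := by
      have := theta_pos hα (m+1)
      rwa [hpnn, hqnn] at this
    have hQP1 : (1:ℝ) ≤ (QP:ℝ) := by rw [← hqpn]; exact one_le_dens m
    have hQN1 : (1:ℝ) ≤ (QN:ℝ) := by rw [← hqnn]; exact one_le_dens (m+1)
    have hQPQN : (QP:ℝ) ≤ (QN:ℝ) := by rw [← hqpn, ← hqnn]; exact of_den_mono
    have hsm0 : 0 < sm := lt_trans (by positivity) hsm
    have hsmlb : 1 / (2 * (QN:ℝ)) < sm := by
      refine lt_of_le_of_lt ?_ hsm
      apply one_div_le_one_div_of_le (by linarith) (by linarith)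
    rw [hqnn] at hlt ⊢
    -- solve for integer coefficients
    set X : ℤ := -(-1)^(m+1) * (a * PN - b * QN) with hXdef
    set Y : ℤ := -(-1)^(m+1) * (b * QP - a * PP) with hYdef
    have hx : (X:ℝ) * (QP:ℝ) + (Y:ℝ) * (QN:ℝ) = (a:ℝ) := by
      rw [hXdef, hYdef]; push_cast
      linear_combination ((-1:ℝ)^(m+1) * a) * hdet + (a:ℝ) * neg_one_pow_mul_self (m+1)
    have hy : (X:ℝ) * (PP:ℝ) + (Y:ℝ) * (PN:ℝ) = (b:ℝ) := by
      rw [hXdef, hYdef]; push_cast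
      linear_combination ((-1:ℝ)^(m+1) * b) * hdet + (b:ℝ) * neg_one_pow_mul_self (m+1)
    have hdecomp : (a:ℝ) * α - (b:ℝ)
        = (X:ℝ) * ((QP:ℝ) * α - (PP:ℝ)) + (Y:ℝ) * ((QN:ℝ) * α - (PN:ℝ)) := by
      rw [← hx, ← hy]; ring
    have habs : |(a:ℝ) * α - (b:ℝ)| = |(X:ℝ) * sm - (Y:ℝ) * sn| := by
      rw [hdecomp]
      have h1 : (QP:ℝ) * α - (PP:ℝ) = (-1:ℝ)^m * sm := by
        rw [hsmdef, ← mul_assoc, neg_one_pow_mul_self, one_mul]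
      have h2 : (QN:ℝ) * α - (PN:ℝ) = (-1:ℝ)^(m+1) * sn := by
        rw [hsndef, ← mul_assoc, neg_one_pow_mul_self, one_mul]
      rw [h1, h2]
      have h3 : (X:ℝ) * ((-1:ℝ)^m * sm) + (Y:ℝ) * ((-1:ℝ)^(m+1) * sn)
          = (-1:ℝ)^m * ((X:ℝ) * sm - (Y:ℝ) * sn) := by rw [pow_succ]; ring
      rw [h3, abs_mul, abs_pow, abs_neg, abs_one, one_pow, one_mul]
    rw [habs]
    by_cases hY : Y = 0
    · have hX : X ≠ 0 := by
        intro h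
        apply ha
        have : (a:ℝ) = 0 := by rw [← hx, h, hY]; push_cast; ring
        exact_mod_cast this
      have hXabs : (1:ℝ) ≤ |(X:ℝ)| := by exact_mod_cast Int.one_le_abs hX
      refine lt_of_lt_of_le hsmlb (abs_comb hXabs hsm0 hsn0 ?_)
      rw [hY]; push_cast; simp
    · have hYabs : (1:ℝ) ≤ |(Y:ℝ)| := by exact_mod_cast Int.one_le_abs hY
      by_cases hX : X = 0
      · exfalso
        have hae : (a:ℝ) = (Y:ℝ) * (QN:ℝ) := by rw [← hx, hX]; push_cast; ring
        have : |(a:ℝ)| = |(Y:ℝ)| * (QN:ℝ) := by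
          rw [hae, abs_mul, abs_of_pos (by linarith : (0:ℝ) < (QN:ℝ))]
        nlinarith
      · have hXabs : (1:ℝ) ≤ |(X:ℝ)| := by exact_mod_cast Int.one_le_abs hX
        rcases le_or_gt (X * Y) 0 with hsign | hsign
        · refine lt_of_lt_of_le hsmlb (abs_comb hXabs hsm0 hsn0 ?_)
          exact_mod_cast hsign
        · exfalso
          have hsign' : (0:ℝ) ≤ (X:ℝ) * (Y:ℝ) := by exact_mod_cast hsign.le
          have := abs_comb2 hYabs (by linarith : (0:ℝ) ≤ (QP:ℝ))
            (by linarith : (0:ℝ) < (QN:ℝ)) hsign'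
          rw [hx] at this
          linarith

end SepAux2

/-- The distance from `x` to the nearest integer, `‖x‖`. -/
def distNearestInt (x : ℝ) : ℝ := |x - round x|

theorem separation_of_orbit_points (α : ℝ) (hα : Irrational α) (β τ₂ : ℝ)
    (hτ₂ : 2 ≤ τ₂) (p : ℤ) (q : ℕ) (hq : 0 < q)
    (hβ : |β - (p : ℝ) / (q : ℝ)| ≤ 1 / (q : ℝ) ^ τ₂)
    -- `q'` is the denominator of some convergent of the continued fraction of `α`
    (n : ℕ) (q' : ℝ) (hq' : q' = (GenContFract.of α).dens n)
    (hq'small : 4 * q' ≤ (q : ℝ) ^ (τ₂ / 2))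
    (j j' : ℤ) (hjj' : j ≠ j') (hjlt : |((j - j' : ℤ) : ℝ)| < q')
    (k k' : ℤ) (hmod : k ≡ k' [ZMOD q]) (hklt : |((k - k' : ℤ) : ℝ)| < q') :
    1 / (4 * q') ≤
      distNearestInt ((α * (j : ℝ) + β * (k : ℝ)) - (α * (j' : ℝ) + β * (k' : ℝ))) := by
  have hq0 : (0:ℝ) < (q:ℝ) := by exact_mod_cast hq
  have hq'1 : (1:ℝ) ≤ q' := by rw [hq']; exact SepAux2.one_le_dens n
  have hq'0 : (0:ℝ) < q' := by linarith
  set Q : ℝ := (q:ℝ) ^ (τ₂ / 2) with hQdef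
  have hQQ : Q * Q = (q:ℝ) ^ τ₂ := by
    rw [hQdef, ← Real.rpow_add hq0]; ring_nf
  have hQ4 : 4 * q' ≤ Q := hq'small
  have hQ0 : (0:ℝ) < Q := by linarith
  -- extract the divisibility
  obtain ⟨M, hM⟩ : (q:ℤ) ∣ k - k' := (Int.ModEq.dvd hmod.symm)
  set x : ℝ := (α * (j:ℝ) + β * (k:ℝ)) - (α * (j':ℝ) + β * (k':ℝ)) with hxdef
  set r : ℤ := round x with hrdef
  set a : ℤ := j - j' with hadef
  set b : ℤ := r - p * M with hbdef
  have ha0 : a ≠ 0 := sub_ne_zero.mpr hjj'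
  have hkk : (k:ℝ) - (k':ℝ) = (q:ℝ) * (M:ℝ) := by exact_mod_cast congrArg (Int.cast : ℤ → ℝ) hM
  set ε : ℝ := β - (p:ℝ)/(q:ℝ) with hεdef
  have h3 : x - (r:ℝ) = ((a:ℝ) * α - (b:ℝ)) + ε * ((k:ℝ) - (k':ℝ)) := by
    rw [hxdef, hadef, hbdef, hεdef, hkk]
    push_cast
    field_simp
    linear_combination β * hkk
  -- lower bound on the main term
  have h1 : 1 / (2 * q') < |(a:ℝ) * α - (b:ℝ)| := by
    rw [hq']
    apply SepAux2.best_approx hα n a b ha0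
    rw [← hq']
    exact_mod_cast hjlt
  -- upper bound on the perturbation
  have h2 : |ε * ((k:ℝ) - (k':ℝ))| ≤ 1 / (16 * q') := by
    rw [abs_mul]
    have hεb : |ε| ≤ 1 / (Q * Q) := by rw [hQQ]; exact hβ
    have hkb : |(k:ℝ) - (k':ℝ)| ≤ q' := by
      have : ((k - k' : ℤ) : ℝ) = (k:ℝ) - (k':ℝ) := by push_cast; ring
      rw [← this]; exact hklt.le
    have habs0 : (0:ℝ) ≤ |(k:ℝ) - (k':ℝ)| := abs_nonneg _
    have step : |ε| * |(k:ℝ) - (k':ℝ)| ≤ (1 / (Q * Q)) * q' := by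
      apply mul_le_mul hεb hkb habs0 (by positivity)
    refine step.trans ?_
    rw [div_mul_eq_mul_div, one_mul, div_le_div_iff₀ (by positivity) (by positivity)]
    nlinarith
  -- combine
  have h4 : |(a:ℝ) * α - (b:ℝ)| - |ε * ((k:ℝ) - (k':ℝ))| ≤ |x - (r:ℝ)| := by
    have := abs_sub_abs_le_abs_sub ((a:ℝ) * α - (b:ℝ)) (-(ε * ((k:ℝ) - (k':ℝ))))
    simp only [abs_neg, sub_neg_eq_add] at this
    calc |(a:ℝ) * α - (b:ℝ)| - |ε * ((k:ℝ) - (k':ℝ))| ≤ |((a:ℝ) * α - (b:ℝ)) + ε * ((k:ℝ) - (k':ℝ))| := this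
      _ = |x - (r:ℝ)| := by rw [h3]
  have h5 : 1 / (4 * q') ≤ 1 / (2 * q') - 1 / (16 * q') := by
    rw [div_sub_div _ _ (by positivity : (2:ℝ) * q' ≠ 0) (by positivity : (16:ℝ) * q' ≠ 0),
      div_le_div_iff₀ (by positivity) (by positivity)]
    nlinarith
  show 1 / (4 * q') ≤ |x - (r:ℝ)|
  linarith
end
end
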